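/- Suppose G is an abelian group of order 2u with a subgroup H of order 2t, where t is odd and u/t ≡ 3 (mod 4). Then there is no frame starter in G \ H. -/

import Mathlib

open scoped Classical

variable {G : Type*} [AddCommGroup G]

/-- The multiset of all elements appearing in the pairs of `S`. -/
def starterElems (S : Finset (G × G)) : Multiset G :=
  S.val.bind fun p => {p.1, p.2}

/-- The multiset of all differences `±(x - y)` arising from the pairs of `S`. -/
def starterDiffs (S : Finset (G × G)) : Multiset G :=
  S.val.bind fun p => {p.1 - p.2, p.2 - p.1}

/-- `S` is a frame starter in `G \ H`: its pairs partition `G \ H` and its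
differences `±(x - y)` enumerate each element of `G \ H` exactly once. -/
def IsFrameStarter (H : AddSubgroup G) (S : Finset (G × G)) : Prop :=
  (∀ z : G, (starterElems S).count z = if z ∈ H then 0 else 1) ∧
  (∀ z : G, (starterDiffs S).count z = if z ∈ H then 0 else 1)

/-- A frame starter is strong if the pair sums are pairwise distinct and avoid `H`. -/
def IsStrongFrameStarter (H : AddSubgroup G) (S : Finset (G × G)) : Prop :=
  IsFrameStarter H S ∧
  (∀ p ∈ S, p.1 + p.2 ∉ H) ∧
  (∀ p ∈ S, ∀ q ∈ S, p.1 + p.2 = q.1 + q.2 → p = q)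

/-- Key structural lemma: in a finite abelian group of order `2w` with `w` odd,
for `v` odd with `w ∣ v`, the set `{z | v • z = 0}` has exactly `w` elements,
and all nonzero values of `z ↦ v • z` coincide. -/
lemma key_card {K : Type*} [AddCommGroup K] [Fintype K] (v w : ℕ)
    (hcard : Nat.card K = 2 * w) (hw : Odd w) (hv : Odd v) (hdvd : w ∣ v) :
    Nat.card {z : K // v • z = 0} = w ∧
      ∀ x y : K, v • x ≠ 0 → v • y ≠ 0 → v • x = v • y := by
  set ψ : K →+ K := AddMonoidHom.mk' (fun z => v • z) (fun a b => smul_add v a b) with hψ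
  have hψapp : ∀ z : K, ψ z = v • z := fun z => rfl
  -- the kernel has odd cardinality
  have hkodd : ¬ 2 ∣ Nat.card ψ.ker := by
    intro h
    haveI : Fact (Nat.Prime 2) := ⟨Nat.prime_two⟩
    obtain ⟨x, hx⟩ := exists_prime_addOrderOf_dvd_card (G := ψ.ker) 2
      (by rwa [← Nat.card_eq_fintype_card])
    have hvx : v • x = 0 := by
      have hx2 : v • (x : K) = 0 := x.2
      ext
      simp only [AddSubgroupClass.coe_nsmul]; exact hx2
    have h2v : (2 : ℕ) ∣ v := by
      rw [← hx]; exact addOrderOf_dvd_iff_nsmul_eq_zero.2 hvx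
    rw [Nat.odd_iff] at hv
    omega
  -- the range has exponent dividing 2
  have hr2 : ∀ y : ψ.range, 2 • y = 0 := by
    rintro ⟨y, x, rfl⟩
    have hx : (v * 2) • x = 0 := by
      refine addOrderOf_dvd_iff_nsmul_eq_zero.1 ?_
      calc addOrderOf x ∣ Nat.card K := addOrderOf_dvd_natCard x
        _ = 2 * w := hcard
        _ ∣ v * 2 := by
            obtain ⟨c, rfl⟩ := hdvd
            exact ⟨c, by ring⟩
    ext
    have : 2 • (ψ x) = 0 := by rw [hψapp, ← mul_nsmul]; exact hx
    simpa using this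
  -- every prime dividing the range's cardinality is 2
  have hrp : ∀ p : ℕ, Nat.Prime p → p ∣ Nat.card ψ.range → p = 2 := by
    intro p hp hdp
    haveI : Fact (Nat.Prime p) := ⟨hp⟩
    obtain ⟨y, hy⟩ := exists_prime_addOrderOf_dvd_card (G := ψ.range) p
      (by rwa [← Nat.card_eq_fintype_card])
    have : addOrderOf y ∣ 2 := addOrderOf_dvd_iff_nsmul_eq_zero.2 (hr2 y)
    rw [hy] at this
    exact (Nat.prime_dvd_prime_iff_eq hp Nat.prime_two).1 this
  -- there is an element with `v • x ≠ 0`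
  obtain ⟨x₀, hx₀⟩ : ∃ x : K, v • x ≠ 0 := by
    haveI : Fact (Nat.Prime 2) := ⟨Nat.prime_two⟩
    obtain ⟨x, hx⟩ := exists_prime_addOrderOf_dvd_card (G := K) 2
      (by rw [← Nat.card_eq_fintype_card, hcard]; exact ⟨w, rfl⟩)
    refine ⟨x, ?_⟩
    have h2x : 2 • x = 0 := by
      rw [← hx]; exact addOrderOf_dvd_iff_nsmul_eq_zero.1 dvd_rfl
    obtain ⟨s, rfl⟩ := hv
    have hxne : x ≠ 0 := by
      intro h; rw [h, addOrderOf_zero] at hx; omega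
    have : (2 * s + 1) • x = x := by
      rw [add_nsmul, one_nsmul, mul_nsmul, h2x, smul_zero, zero_add]
    rw [this]; exact hxne
  have hrange_ne : (⟨v • x₀, ⟨x₀, rfl⟩⟩ : ψ.range) ≠ 0 := by
    intro h
    exact hx₀ (by simpa using congrArg Subtype.val h)
  haveI : Nontrivial ψ.range := ⟨⟨_, 0, hrange_ne⟩⟩
  -- cardinality bookkeeping
  have hcard_eq : 2 * w = Nat.card ψ.range * Nat.card ψ.ker := by
    rw [← hcard, AddSubgroup.card_eq_card_quotient_mul_card_addSubgroup ψ.ker,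
      Nat.card_congr (QuotientAddGroup.quotientKerEquivRange ψ).toEquiv]
  have hrne1 : Nat.card ψ.range ≠ 1 := by
    rw [Nat.card_eq_fintype_card]
    have := Fintype.one_lt_card_iff_nontrivial.2 (inferInstance : Nontrivial ψ.range)
    omega
  have h2r : 2 ∣ Nat.card ψ.range := by
    obtain ⟨p, hp, hpd⟩ := Nat.exists_prime_and_dvd hrne1
    rwa [hrp p hp hpd] at hpd
  obtain ⟨s, hs⟩ := h2r
  have hrange2 : Nat.card ψ.range = 2 := by
    have hs1 : s = 1 := by
      by_contra hsne
      have hs0 : s ≠ 0 := by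
        intro h; rw [h, mul_zero] at hs
        rw [hs] at hcard_eq; simp at hcard_eq
        rw [Nat.odd_iff] at hw; omega
      obtain ⟨q, hq, hqd⟩ := Nat.exists_prime_and_dvd hsne
      have hq2 : q = 2 := hrp q hq (hs ▸ hqd.mul_left 2)
      have : 2 ∣ w := by
        have : (2 : ℕ) ∣ s := hq2 ▸ hqd
        obtain ⟨c, rfl⟩ := this
        have : 2 * w = 2 * (2 * (c * Nat.card ψ.ker)) := by
          rw [hcard_eq, hs]; ring
        exact ⟨c * Nat.card ψ.ker, by omega⟩
      rw [Nat.odd_iff] at hw; omega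
    rw [hs, hs1, mul_one]
  have hker_card : Nat.card ψ.ker = w := by
    rw [hrange2] at hcard_eq; omega
  constructor
  · rw [← hker_card]
    exact Nat.card_congr (Equiv.subtypeEquivRight fun z =>
      by simp [AddMonoidHom.mem_ker, hψapp])
  · intro x y hx hy
    -- both `v • x` and `v • y` are nonzero elements of a subgroup of cardinality 2
    by_contra hne
    set a : ψ.range := ⟨v • x, ⟨x, rfl⟩⟩ with ha
    set b : ψ.range := ⟨v • y, ⟨y, rfl⟩⟩ with hb
    have hane : a ≠ 0 := fun h => hx (congrArg Subtype.val h)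
    have hbne : b ≠ 0 := fun h => hy (congrArg Subtype.val h)
    have habne : a ≠ b := fun h => hne (congrArg Subtype.val h)
    have h3 : ({0, a, b} : Finset ψ.range).card = 3 := by
      rw [Finset.card_insert_of_notMem (by simp [Ne.symm hane, Ne.symm hbne]),
        Finset.card_insert_of_notMem (by simp [habne]), Finset.card_singleton]
    have := Finset.card_le_univ ({0, a, b} : Finset ψ.range)
    rw [h3, ← Nat.card_eq_fintype_card, hrange2] at this
    omega

lemma countP_pair {β : Type*} (p : β → Prop) [DecidablePred p] (a b : β) :
    Multiset.countP p {a, b} = (if p a then 1 else 0) + (if p b then 1 else 0) := by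
  rw [Multiset.insert_eq_cons, Multiset.countP_cons,
    show ({b} : Multiset β) = b ::ₘ 0 from rfl, Multiset.countP_cons, Multiset.countP_zero,
    zero_add, add_comm]

lemma countP_bind {α β : Type*} (s : Multiset α) (f : α → Multiset β) (p : β → Prop)
    [DecidablePred p] :
    (s.bind f).countP p = (s.map fun a => (f a).countP p).sum := by
  induction s using Multiset.induction with
  | empty => simp
  | cons a s ih => simp [Multiset.cons_bind, Multiset.countP_add, ih]


theorem stmt_7 [Fintype G] (H : AddSubgroup G) (u t : ℕ)
    (hG : Nat.card G = 2 * u) (hH : Nat.card H = 2 * t)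
    (ht : Odd t) (hdvd : t ∣ u) (hmod : u / t % 4 = 3) :
    ¬ ∃ S : Finset (G × G), IsFrameStarter H S := by
  rintro ⟨S, h1, h2⟩
  set m := u / t with hm
  have hum : u = t * m := (Nat.mul_div_cancel' hdvd).symm
  have hmodd : Odd m := by rw [Nat.odd_iff]; omega
  have huodd : Odd u := hum ▸ ht.mul hmodd
  -- apply the key lemma to `G` and to `H`
  obtain ⟨hAcard, huniq⟩ := key_card (K := G) u u hG huodd huodd dvd_rfl
  obtain ⟨hAHcard, -⟩ := key_card (K := H) u t hH ht huodd hdvd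
  -- translate the subtype counts into filter counts
  have hfilterA : (Finset.univ.filter fun z : G => u • z = 0).card = u := by
    rw [← Fintype.card_subtype, ← Nat.card_eq_fintype_card]; exact hAcard
  have hfilterAH : (Finset.univ.filter fun z : G => z ∈ H ∧ u • z = 0).card = t := by
    rw [← Fintype.card_subtype, ← Nat.card_eq_fintype_card, ← hAHcard]
    refine Nat.card_congr ⟨fun x => ⟨⟨x.1, x.2.1⟩, ?_⟩, fun y => ⟨y.1.1, y.1.2, ?_⟩, ?_, ?_⟩
    · ext; simpa using x.2.2
    · exact_mod_cast congrArg Subtype.val y.2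
    · intro x; rfl
    · intro y; rfl
  have hfilterH : (Finset.univ.filter fun z : G => z ∈ H).card = 2 * t := by
    rw [← Fintype.card_subtype, ← Nat.card_eq_fintype_card]
    exact hH
  have hGcard : (Finset.univ : Finset G).card = 2 * u := by
    rw [Finset.card_univ, ← Nat.card_eq_fintype_card]; exact hG
  -- counting elements with `u • z ≠ 0`
  have hfilterP : (Finset.univ.filter fun z : G => ¬ u • z = 0).card = u := by
    have h := Finset.card_filter_add_card_filter_not
      (s := (Finset.univ : Finset G)) (p := fun z : G => u • z = 0)
    rw [hfilterA, hGcard] at h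
    omega
  have hfilterPH : (Finset.univ.filter fun z : G => z ∈ H ∧ ¬ u • z = 0).card = t := by
    have h := Finset.card_filter_add_card_filter_not
      (s := Finset.univ.filter fun z : G => z ∈ H) (p := fun z : G => u • z = 0)
    rw [Finset.filter_filter, Finset.filter_filter] at h
    rw [hfilterAH, hfilterH] at h
    omega
  have hfilterPnH :
      (Finset.univ.filter fun z : G => ¬ z ∈ H ∧ ¬ u • z = 0).card + t = u := by
    have h := Finset.card_filter_add_card_filter_not
      (s := Finset.univ.filter fun z : G => ¬ u • z = 0) (p := fun z : G => z ∈ H)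
    rw [Finset.filter_filter, Finset.filter_filter] at h
    have e1 : (Finset.univ.filter fun a : G => ¬ u • a = 0 ∧ a ∈ H).card = t := by
      rw [← hfilterPH]; apply congrArg; apply Finset.filter_congr; intro z _
      tauto
    have e2 : (Finset.univ.filter fun a : G => ¬ u • a = 0 ∧ ¬ a ∈ H).card
        = (Finset.univ.filter fun z : G => ¬ z ∈ H ∧ ¬ u • z = 0).card := by
      apply congrArg; apply Finset.filter_congr; intro z _
      tauto
    rw [e1, e2, hfilterP] at h
    omega
  -- the elements / differences multisets both equal `(G \\ H)` as a multiset
  have hmulE : starterElems S = (Finset.univ.filter fun z : G => ¬ z ∈ H).val := by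
    refine Multiset.ext.2 fun z => ?_
    rw [h1 z, Finset.filter_val, Multiset.count_filter]
    by_cases hz : z ∈ H <;> simp [hz]
  have hmulD : starterDiffs S = (Finset.univ.filter fun z : G => ¬ z ∈ H).val := by
    refine Multiset.ext.2 fun z => ?_
    rw [h2 z, Finset.filter_val, Multiset.count_filter]
    by_cases hz : z ∈ H <;> simp [hz]
  set P : G → Prop := fun z => ¬ u • z = 0 with hP
  have hEcount : (starterElems S).countP P = (starterDiffs S).countP P := by
    rw [hmulE, hmulD]
  have hEval : (starterElems S).countP P + t = u := by
    rw [hmulE, Multiset.countP_eq_card_filter]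
    have : Multiset.filter P (Finset.univ.filter fun z : G => ¬ z ∈ H).val
        = ((Finset.univ.filter fun z : G => ¬ z ∈ H).filter P).val := by
      simp [Finset.filter_val]
    rw [this]
    show ((Finset.univ.filter fun z : G => ¬ z ∈ H).filter P).card + t = u
    rw [Finset.filter_filter]
    exact hfilterPnH
  -- express the counts as sums over `S`
  have hEsum : (starterElems S).countP P
      = ∑ p ∈ S, ((if P p.1 then 1 else 0) + (if P p.2 then 1 else 0)) := by
    rw [starterElems, countP_bind]
    show (S.val.map fun a : G × G => Multiset.countP P {a.1, a.2}).sum = _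
    rw [Finset.sum]
    congr 1
    apply Multiset.map_congr rfl
    intro p _
    exact countP_pair P p.1 p.2
  have hDsum : (starterDiffs S).countP P
      = ∑ p ∈ S, ((if P (p.1 - p.2) then 1 else 0) + (if P (p.2 - p.1) then 1 else 0)) := by
    rw [starterDiffs, countP_bind]
    show (S.val.map fun a : G × G => Multiset.countP P {a.1 - a.2, a.2 - a.1}).sum = _
    rw [Finset.sum]
    congr 1
    apply Multiset.map_congr rfl
    intro p _
    exact countP_pair P (p.1 - p.2) (p.2 - p.1)
  -- the per-pair identity
  have key2 : ∀ p : G × G,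
      2 * ((if P p.1 then 1 else 0) + (if P p.2 then 1 else 0))
        = ((if P (p.1 - p.2) then 1 else 0) + (if P (p.2 - p.1) then 1 else 0))
          + 4 * (if P p.1 ∧ P p.2 then 1 else 0) := by
    intro p
    by_cases h1 : u • p.1 = 0 <;> by_cases h2 : u • p.2 = 0
    · have e1 : u • (p.1 - p.2) = 0 := by rw [nsmul_sub, h1, h2, sub_zero]
      have e2 : u • (p.2 - p.1) = 0 := by rw [nsmul_sub, h1, h2, sub_zero]
      simp [hP, h1, h2, e1, e2]
    · have e1 : ¬ u • (p.1 - p.2) = 0 := by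
        rw [nsmul_sub, h1, zero_sub, neg_eq_zero]; exact h2
      have e2 : ¬ u • (p.2 - p.1) = 0 := by
        rw [nsmul_sub, h1, sub_zero]; exact h2
      simp [hP, h1, h2, e1, e2]
    · have e1 : ¬ u • (p.1 - p.2) = 0 := by
        rw [nsmul_sub, h2, sub_zero]; exact h1
      have e2 : ¬ u • (p.2 - p.1) = 0 := by
        rw [nsmul_sub, h2, zero_sub, neg_eq_zero]; exact h1
      simp [hP, h1, h2, e1, e2]
    · have e0 : u • p.1 = u • p.2 := huniq _ _ h1 h2
      have e1 : u • (p.1 - p.2) = 0 := by rw [nsmul_sub, e0, sub_self]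
      have e2 : u • (p.2 - p.1) = 0 := by rw [nsmul_sub, e0, sub_self]
      simp [hP, h1, h2, e1, e2]
  -- summing the per-pair identity
  have hsum2 : 2 * ((starterElems S).countP P)
      = (starterDiffs S).countP P + 4 * ∑ p ∈ S, (if P p.1 ∧ P p.2 then 1 else 0) := by
    rw [hEsum, hDsum, Finset.mul_sum, Finset.mul_sum, ← Finset.sum_add_distrib]
    exact Finset.sum_congr rfl fun p _ => key2 p
  -- final arithmetic contradiction
  set E := (starterElems S).countP P with hE
  set B := ∑ p ∈ S, (if P p.1 ∧ P p.2 then 1 else 0) with hB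
  rw [← hEcount] at hsum2
  -- 2E = E + 4B, E + t = u, u = t*m, t odd, m % 4 = 3
  obtain ⟨a, hta⟩ := ht
  obtain ⟨c, hc⟩ : ∃ c, m = 4 * c + 3 := ⟨m / 4, by omega⟩
  have hu4 : u = 4 * (t * c) + 3 * t := by rw [hum, hc]; ring
  omega
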